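/- The φ-divergence is jointly lower semicontinuous: the function (s,t) ↦ D_φ(s∣t) from [0,∞)^m × [0,∞)^m to ℝ ∪ {∞} is lower semicontinuous (with respect to the product topology on [0,∞)^m × [0,∞)^m and the order topology on ℝ ∪ {∞}). -/

import Mathlib

open Filter Topology

/-- The extended-real-valued integrand `f(v,w)` of a `φ`-divergence:
`f(v,w) = w·φ(v/w)` if `w > 0`, `f(v,0) = v·L` if `v > 0`, and `f(0,0) = 0`,
where `L = lim_{x→∞} φ(x)/x ∈ ℝ ∪ {∞}`. -/
noncomputable def phiF (φ : ℝ → ℝ) (L : EReal) (v w : ℝ) : EReal :=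
  if 0 < w then ((w * φ (v / w) : ℝ) : EReal)
  else if 0 < v then (v : EReal) * L
  else 0

/-- The `φ`-divergence `D_φ(s∣t) = Σ_{i=1}^m f(s_i, t_i)` of `s` relative to `t`. -/
noncomputable def Dphi (φ : ℝ → ℝ) (L : EReal) {m : ℕ} (s t : Fin m → ℝ) : EReal :=
  ∑ i, phiF φ L (s i) (t i)

section Aux

variable {φ : ℝ → ℝ} {L : EReal}

/-- Secant-line minorant off the chord interval. -/
lemma phiF_minorant (hφ : ConvexOn ℝ (Set.Ici 0) φ) {a b x : ℝ}
    (ha : 0 ≤ a) (hab : a < b) (hx : 0 ≤ x) (hcase : x ≤ a ∨ b ≤ x) :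
    φ a + (φ b - φ a) / (b - a) * (x - a) ≤ φ x := by
  set c := (φ b - φ a) / (b - a) with hc
  have hba : (0:ℝ) < b - a := by linarith
  have hcb : c * (b - a) = φ b - φ a := div_mul_cancel₀ _ hba.ne'
  rcases hcase with h | h
  · rcases h.eq_or_lt with rfl | hxa
    · simp
    · have hs := hφ.slope_mono_adjacent (Set.mem_Ici.2 hx)
        (Set.mem_Ici.2 (by linarith : (0:ℝ) ≤ b)) hxa hab
      have hax : (0:ℝ) < a - x := by linarith
      rw [div_le_iff₀ hax] at hs
      have hcc : c * (x - a) = -(c * (a - x)) := by ring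
      linarith
  · rcases h.eq_or_lt with rfl | hbx
    · linarith [hcb]
    · have hs := hφ.slope_mono_adjacent (Set.mem_Ici.2 ha) (Set.mem_Ici.2 hx) hab hbx
      have hxb : (0:ℝ) < x - b := by linarith
      have h1 : c * (x - b) ≤ φ x - φ b := by
        rw [← le_div_iff₀ hxb]
        exact hc ▸ hs
      have h2 : c * (x - a) = c * (b - a) + c * (x - b) := by ring
      linarith

/-- Every secant slope is below the asymptotic slope `L`. -/
lemma slope_le_L (hφ : ConvexOn ℝ (Set.Ici 0) φ)
    (hL : Tendsto (fun x : ℝ => ((φ x / x : ℝ) : EReal)) atTop (𝓝 L))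
    {a b : ℝ} (ha : 0 ≤ a) (hab : a < b) :
    (((φ b - φ a) / (b - a) : ℝ) : EReal) ≤ L := by
  set c := (φ b - φ a) / (b - a) with hc
  have hreal : Tendsto (fun x : ℝ => c + (φ a - c * a) / x) atTop (𝓝 c) := by
    have h0 : Tendsto (fun x : ℝ => (φ a - c * a) / x) atTop (𝓝 0) :=
      Tendsto.div_atTop tendsto_const_nhds tendsto_id
    simpa using tendsto_const_nhds.add h0
  have hgt : Tendsto (fun x : ℝ => ((c + (φ a - c * a) / x : ℝ) : EReal)) atTop
      (𝓝 ((c : ℝ) : EReal)) :=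
    (continuous_coe_real_ereal.tendsto c).comp hreal
  have h1 : ∀ᶠ x in atTop,
      ((c + (φ a - c * a) / x : ℝ) : EReal) ≤ ((φ x / x : ℝ) : EReal) := by
    filter_upwards [eventually_ge_atTop (max b 1)] with x hx
    have hxb : b ≤ x := le_trans (le_max_left _ _) hx
    have hx0 : (0:ℝ) < x := lt_of_lt_of_le one_pos (le_trans (le_max_right _ _) hx)
    have hm := phiF_minorant hφ ha hab (by linarith : (0:ℝ) ≤ x) (Or.inr hxb)
    rw [EReal.coe_le_coe_iff]
    have heq : c + (φ a - c * a) / x = (c * x + (φ a - c * a)) / x := by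
      field_simp
    have hnum : c * x + (φ a - c * a) ≤ φ x := by
      have hcc : c * (x - a) = c * x - c * a := by ring
      linarith
    rw [heq]
    gcongr
  have e1 : liminf (fun x : ℝ => ((φ x / x : ℝ) : EReal)) atTop = L := hL.liminf_eq
  have e2 : liminf (fun x : ℝ => ((c + (φ a - c * a) / x : ℝ) : EReal)) atTop
      = ((c : ℝ) : EReal) := hgt.liminf_eq
  rw [← e1, ← e2]
  exact liminf_le_liminf h1

lemma exists_slope_gt (hφ : ConvexOn ℝ (Set.Ici 0) φ)
    (hL : Tendsto (fun x : ℝ => ((φ x / x : ℝ) : EReal)) atTop (𝓝 L))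
    {y : ℝ} (hy : (y : EReal) < L) :
    ∃ b : ℝ, 1 < b ∧ y < (φ b - φ 1) / (b - 1) := by
  obtain ⟨y', hy1, hy2⟩ := EReal.exists_between_coe_real hy
  have hyy' : y < y' := by exact_mod_cast hy1
  have hev1 : ∀ᶠ x : ℝ in atTop, (y' : EReal) < ((φ x / x : ℝ) : EReal) :=
    hL.eventually (eventually_gt_nhds hy2)
  have hreal : Tendsto (fun x : ℝ => y' + (y' - φ 1) / (x - 1)) atTop (𝓝 y') := by
    have h0 : Tendsto (fun x : ℝ => (y' - φ 1) / (x - 1)) atTop (𝓝 0) :=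
      Tendsto.div_atTop tendsto_const_nhds (tendsto_atTop_add_const_right _ _ tendsto_id)
    simpa using tendsto_const_nhds.add h0
  have hev3 : ∀ᶠ x : ℝ in atTop, y < y' + (y' - φ 1) / (x - 1) :=
    hreal.eventually (eventually_gt_nhds hyy')
  obtain ⟨b, hb1, hb3, hb2⟩ := (hev1.and (hev3.and (eventually_gt_atTop 1))).exists
  refine ⟨b, hb2, ?_⟩
  have hb0 : (0:ℝ) < b := lt_trans one_pos hb2
  have hb1' : y' < φ b / b := by exact_mod_cast hb1
  have hφb : y' * b ≤ φ b := by
    rw [lt_div_iff₀ hb0] at hb1'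
    linarith
  have hb1pos : (0:ℝ) < b - 1 := by linarith
  have key : y' + (y' - φ 1) / (b - 1) ≤ (φ b - φ 1) / (b - 1) := by
    have heq : y' + (y' - φ 1) / (b - 1) = (y' * b - φ 1) / (b - 1) := by
      field_simp
      ring
    rw [heq]
    gcongr
  linarith

lemma L_lt_bot (hφ : ConvexOn ℝ (Set.Ici 0) φ)
    (hL : Tendsto (fun x : ℝ => ((φ x / x : ℝ) : EReal)) atTop (𝓝 L)) : (⊥ : EReal) < L :=
  lt_of_lt_of_le (EReal.bot_lt_coe _) (slope_le_L hφ hL (le_refl (0:ℝ)) one_pos)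

lemma exists_real_lt_mul {v : ℝ} (hv : 0 < v) {M : EReal} {y₂ : ℝ}
    (h : (y₂ : EReal) < (v : EReal) * M) :
    ∃ z : ℝ, (z : EReal) < M ∧ y₂ < v * z := by
  induction M with
  | bot =>
    rw [EReal.coe_mul_bot_of_pos hv] at h
    exact absurd h (by simp)
  | coe ℓ =>
    rw [← EReal.coe_mul, EReal.coe_lt_coe_iff] at h
    have hdiv : y₂ / v < ℓ := (div_lt_iff₀ hv).2 (by linarith)
    refine ⟨(y₂ / v + ℓ) / 2, ?_, ?_⟩
    · rw [EReal.coe_lt_coe_iff]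
      linarith
    · have h2 : y₂ / v < (y₂ / v + ℓ) / 2 := by linarith
      calc y₂ = v * (y₂ / v) := by field_simp
        _ < v * ((y₂ / v + ℓ) / 2) := by exact mul_lt_mul_of_pos_left h2 hv
  | top =>
    refine ⟨(y₂ + 1) / v, EReal.coe_lt_top _, ?_⟩
    have : v * ((y₂ + 1) / v) = y₂ + 1 := by field_simp
    rw [this]
    linarith

lemma phiF_lscOn (hφ : ConvexOn ℝ (Set.Ici 0) φ)
    (hφ0 : ContinuousWithinAt φ (Set.Ici 0) 0)
    (hL : Tendsto (fun x : ℝ => ((φ x / x : ℝ) : EReal)) atTop (𝓝 L)) :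
    LowerSemicontinuousOn (fun p : ℝ × ℝ => phiF φ L p.1 p.2)
      {p : ℝ × ℝ | 0 ≤ p.1 ∧ 0 ≤ p.2} := by
  set S : Set (ℝ × ℝ) := {p : ℝ × ℝ | 0 ≤ p.1 ∧ 0 ≤ p.2} with hS
  have hφcont : ∀ x : ℝ, 0 ≤ x → ContinuousWithinAt φ (Set.Ici 0) x := by
    intro x hx
    rcases hx.eq_or_lt with rfl | hx
    · exact hφ0
    · exact ((hφ.continuousOn_interior x (by simpa [interior_Ici] using hx)).continuousAt
        (by simpa [interior_Ici] using isOpen_Ioi.mem_nhds hx)).continuousWithinAt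
  intro p hp
  obtain ⟨hv, hw⟩ := hp
  rcases hw.eq_or_lt with hw0 | hwpos
  · -- boundary : p.2 = 0
    rcases hv.eq_or_lt with hv0 | hvpos
    · -- p = (0, 0)
      intro y hy
      have hfp : phiF φ L p.1 p.2 = 0 := by
        rw [phiF, if_neg (by rw [← hw0]; exact lt_irrefl 0),
          if_neg (by rw [← hv0]; exact lt_irrefl 0)]
      replace hy : y < phiF φ L p.1 p.2 := hy
      rw [hfp] at hy
      set c₁ : ℝ := φ 2 - φ 1 with hc₁
      set c₂ : ℝ := φ 3 - φ 2 with hc₂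
      have hc₁L : ((c₁ : ℝ) : EReal) ≤ L := by
        have h := slope_le_L hφ hL zero_le_one one_lt_two
        rw [show ((2:ℝ) - 1) = 1 from by norm_num, div_one] at h
        exact h
      have hg₁ : Tendsto (fun q : ℝ × ℝ => ((q.2 * φ 1 + c₁ * (q.1 - q.2) : ℝ) : EReal))
          (𝓝 p) (𝓝 ((p.2 * φ 1 + c₁ * (p.1 - p.2) : ℝ) : EReal)) :=
        (continuous_coe_real_ereal.comp (by fun_prop)).tendsto p
      have hg₂ : Tendsto (fun q : ℝ × ℝ => ((q.2 * φ 2 + c₂ * (q.1 - 2 * q.2) : ℝ) : EReal))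
          (𝓝 p) (𝓝 ((p.2 * φ 2 + c₂ * (p.1 - 2 * p.2) : ℝ) : EReal)) :=
        (continuous_coe_real_ereal.comp (by fun_prop)).tendsto p
      have hp0 : (p.2 * φ 1 + c₁ * (p.1 - p.2) : ℝ) = 0 := by rw [← hv0, ← hw0]; ring
      have hp0' : (p.2 * φ 2 + c₂ * (p.1 - 2 * p.2) : ℝ) = 0 := by rw [← hv0, ← hw0]; ring
      have hev₁ : ∀ᶠ q : ℝ × ℝ in 𝓝 p, y < ((q.2 * φ 1 + c₁ * (q.1 - q.2) : ℝ) : EReal) := by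
        apply hg₁.eventually
        apply eventually_gt_nhds
        rw [hp0]
        exact_mod_cast hy
      have hev₂ : ∀ᶠ q : ℝ × ℝ in 𝓝 p,
          y < ((q.2 * φ 2 + c₂ * (q.1 - 2 * q.2) : ℝ) : EReal) := by
        apply hg₂.eventually
        apply eventually_gt_nhds
        rw [hp0']
        exact_mod_cast hy
      filter_upwards [nhdsWithin_le_nhds hev₁, nhdsWithin_le_nhds hev₂,
        self_mem_nhdsWithin] with q h₁ h₂ hqS
      obtain ⟨hq1, hq2⟩ := hqS
      show y < phiF φ L q.1 q.2
      rcases hq2.eq_or_lt with hq20 | hq2pos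
      · rcases hq1.eq_or_lt with hq10 | hq1pos
        · rw [phiF, if_neg (by rw [← hq20]; exact lt_irrefl 0),
            if_neg (by rw [← hq10]; exact lt_irrefl 0)]
          exact hy
        · rw [phiF, if_neg (by rw [← hq20]; exact lt_irrefl 0), if_pos hq1pos]
          refine lt_of_lt_of_le h₁ ?_
          have heq : ((q.2 * φ 1 + c₁ * (q.1 - q.2) : ℝ) : EReal)
              = ((q.1 : ℝ) : EReal) * ((c₁ : ℝ) : EReal) := by
            rw [← EReal.coe_mul]
            norm_cast
            rw [← hq20]
            ring
          rw [heq]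
          exact mul_le_mul_of_nonneg_left hc₁L (by exact_mod_cast hq1)
      · rw [phiF, if_pos hq2pos]
        set x := q.1 / q.2 with hxdef
        have hx0 : 0 ≤ x := div_nonneg hq1 hq2
        have hqx : q.2 * x = q.1 := by
          rw [hxdef, mul_comm, div_mul_cancel₀ _ hq2pos.ne']
        rcases le_or_gt 2 x with hx2 | hx2
        · refine lt_of_lt_of_le h₁ ?_
          rw [EReal.coe_le_coe_iff]
          have hm := phiF_minorant hφ zero_le_one one_lt_two hx0 (Or.inr hx2)
          rw [show ((2:ℝ) - 1) = 1 from by norm_num, div_one] at hm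
          have hexp : q.2 * (φ 1 + c₁ * (x - 1)) = q.2 * φ 1 + c₁ * (q.1 - q.2) := by
            linear_combination c₁ * hqx
          calc q.2 * φ 1 + c₁ * (q.1 - q.2) = q.2 * (φ 1 + c₁ * (x - 1)) := hexp.symm
            _ ≤ q.2 * φ x := mul_le_mul_of_nonneg_left (by exact_mod_cast hm) hq2
        · rcases le_or_gt x 1 with hx1 | hx1
          · refine lt_of_lt_of_le h₁ ?_
            rw [EReal.coe_le_coe_iff]
            have hm := phiF_minorant hφ zero_le_one one_lt_two hx0 (Or.inl hx1)
            rw [show ((2:ℝ) - 1) = 1 from by norm_num, div_one] at hm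
            have hexp : q.2 * (φ 1 + c₁ * (x - 1)) = q.2 * φ 1 + c₁ * (q.1 - q.2) := by
              linear_combination c₁ * hqx
            calc q.2 * φ 1 + c₁ * (q.1 - q.2) = q.2 * (φ 1 + c₁ * (x - 1)) := hexp.symm
              _ ≤ q.2 * φ x := mul_le_mul_of_nonneg_left (by exact_mod_cast hm) hq2
          · refine lt_of_lt_of_le h₂ ?_
            rw [EReal.coe_le_coe_iff]
            have hm := phiF_minorant hφ (by norm_num : (0:ℝ) ≤ 2)
              (by norm_num : (2:ℝ) < 3) hx0 (Or.inl hx2.le)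
            rw [show ((3:ℝ) - 2) = 1 from by norm_num, div_one] at hm
            have hexp : q.2 * (φ 2 + c₂ * (x - 2)) = q.2 * φ 2 + c₂ * (q.1 - 2 * q.2) := by
              linear_combination c₂ * hqx
            calc q.2 * φ 2 + c₂ * (q.1 - 2 * q.2) = q.2 * (φ 2 + c₂ * (x - 2)) := hexp.symm
              _ ≤ q.2 * φ x := mul_le_mul_of_nonneg_left (by exact_mod_cast hm) hq2
    · -- p.1 > 0, p.2 = 0
      intro y hy
      have hfp : phiF φ L p.1 p.2 = (p.1 : EReal) * L := by
        rw [phiF, if_neg (by rw [← hw0]; exact lt_irrefl 0), if_pos hvpos]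
      replace hy : y < phiF φ L p.1 p.2 := hy
      rw [hfp] at hy
      obtain ⟨y₂, hy₂1, hy₂2⟩ := EReal.exists_between_coe_real hy
      obtain ⟨z, hzL, hy₂z⟩ := exists_real_lt_mul hvpos hy₂2
      obtain ⟨b, hb1, hbz⟩ := exists_slope_gt hφ hL hzL
      set c : ℝ := (φ b - φ 1) / (b - 1) with hc
      have hcL : ((c : ℝ) : EReal) ≤ L := slope_le_L hφ hL zero_le_one hb1
      have hb0 : (0:ℝ) < b := lt_trans one_pos hb1
      have hy₂c : y₂ < p.1 * c := lt_trans hy₂z (mul_lt_mul_of_pos_left hbz hvpos)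
      -- the affine minorant
      have hg : Tendsto (fun q : ℝ × ℝ => ((q.2 * φ 1 + c * (q.1 - q.2) : ℝ) : EReal))
          (𝓝 p) (𝓝 ((p.2 * φ 1 + c * (p.1 - p.2) : ℝ) : EReal)) :=
        (continuous_coe_real_ereal.comp (by fun_prop)).tendsto p
      have hgp : (p.2 * φ 1 + c * (p.1 - p.2) : ℝ) = p.1 * c := by rw [← hw0]; ring
      have hevg : ∀ᶠ q : ℝ × ℝ in 𝓝 p, y < ((q.2 * φ 1 + c * (q.1 - q.2) : ℝ) : EReal) := by
        apply hg.eventually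
        apply eventually_gt_nhds
        rw [hgp]
        calc y < (y₂ : EReal) := hy₂1
          _ < ((p.1 * c : ℝ) : EReal) := by exact_mod_cast hy₂c
      have hev1 : ∀ᶠ q : ℝ × ℝ in 𝓝 p, p.1 / 2 < q.1 :=
        (continuous_fst.tendsto p).eventually (eventually_gt_nhds (by linarith))
      have hev2 : ∀ᶠ q : ℝ × ℝ in 𝓝 p, q.2 < p.1 / (2 * b) := by
        have hlt : p.2 < p.1 / (2 * b) := by rw [← hw0]; positivity
        exact (continuous_snd.tendsto p).eventually (eventually_lt_nhds hlt)
      filter_upwards [nhdsWithin_le_nhds hevg, nhdsWithin_le_nhds hev1,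
        nhdsWithin_le_nhds hev2, self_mem_nhdsWithin] with q hgq hq1big hq2small hqS
      obtain ⟨hq1, hq2⟩ := hqS
      have hq1pos : 0 < q.1 := lt_of_le_of_lt (by positivity) hq1big
      rcases hq2.eq_or_lt with hq20 | hq2pos
      · rw [phiF, if_neg (by rw [← hq20]; exact lt_irrefl 0), if_pos hq1pos]
        refine lt_of_lt_of_le hgq ?_
        have heq : ((q.2 * φ 1 + c * (q.1 - q.2) : ℝ) : EReal)
            = ((q.1 : ℝ) : EReal) * ((c : ℝ) : EReal) := by
          rw [← EReal.coe_mul]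
          norm_cast
          rw [← hq20]
          ring
        rw [heq]
        exact mul_le_mul_of_nonneg_left hcL (by exact_mod_cast hq1)
      · rw [phiF, if_pos hq2pos]
        set x := q.1 / q.2 with hxdef
        have hx0 : 0 ≤ x := div_nonneg hq1 hq2
        have hqx : q.2 * x = q.1 := by
          rw [hxdef, mul_comm, div_mul_cancel₀ _ hq2pos.ne']
        have hbx : b ≤ x := by
          rw [hxdef, le_div_iff₀ hq2pos]
          have : b * q.2 < b * (p.1 / (2 * b)) := mul_lt_mul_of_pos_left hq2small hb0
          have heqb : b * (p.1 / (2 * b)) = p.1 / 2 := by field_simp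
          nlinarith [hq1big]

        refine lt_of_lt_of_le hgq ?_
        rw [EReal.coe_le_coe_iff]
        have hm := phiF_minorant hφ zero_le_one hb1 hx0 (Or.inr hbx)
        have hexp : q.2 * (φ 1 + c * (x - 1)) = q.2 * φ 1 + c * (q.1 - q.2) := by
          linear_combination c * hqx
        calc q.2 * φ 1 + c * (q.1 - q.2) = q.2 * (φ 1 + c * (x - 1)) := hexp.symm
          _ ≤ q.2 * φ x := mul_le_mul_of_nonneg_left (by exact_mod_cast hm) hq2
  · -- 0 < p.2 : continuity
    have hcont : ContinuousWithinAt (fun q : ℝ × ℝ => ((q.2 * φ (q.1 / q.2) : ℝ) : EReal)) S p := by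
      have hdiv : ContinuousWithinAt (fun q : ℝ × ℝ => q.1 / q.2) S p :=
        (continuousAt_fst.div continuousAt_snd hwpos.ne').continuousWithinAt
      have hmaps : Set.MapsTo (fun q : ℝ × ℝ => q.1 / q.2) S (Set.Ici 0) :=
        fun q hq => div_nonneg hq.1 hq.2
      have hphi : ContinuousWithinAt (fun q : ℝ × ℝ => φ (q.1 / q.2)) S p :=
        ContinuousWithinAt.comp (t := Set.Ici 0) (hφcont _ (div_nonneg hv hw)) hdiv hmaps
      exact continuous_coe_real_ereal.continuousAt.comp_continuousWithinAt
        (continuousAt_snd.continuousWithinAt.mul hphi)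
    intro y hy
    have hfp : phiF φ L p.1 p.2 = ((p.2 * φ (p.1 / p.2) : ℝ) : EReal) := by
      rw [phiF, if_pos hwpos]
    replace hy : y < phiF φ L p.1 p.2 := hy
    rw [hfp] at hy
    have hev := Filter.Tendsto.eventually hcont (eventually_gt_nhds hy)
    have hpos : ∀ᶠ q : ℝ × ℝ in 𝓝[S] p, 0 < q.2 :=
      nhdsWithin_le_nhds ((continuous_snd.tendsto p).eventually (eventually_gt_nhds hwpos))
    filter_upwards [hev, hpos] with q h1 h2
    show y < phiF φ L q.1 q.2
    rw [phiF, if_pos h2]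
    exact h1

lemma phiF_ne_bot (hφ : ConvexOn ℝ (Set.Ici 0) φ)
    (hL : Tendsto (fun x : ℝ => ((φ x / x : ℝ) : EReal)) atTop (𝓝 L))
    {v w : ℝ} (hv : 0 ≤ v) : phiF φ L v w ≠ ⊥ := by
  rw [phiF]
  split_ifs with h1 h2
  · exact EReal.coe_ne_bot _
  · have hc := slope_le_L hφ hL (le_refl (0:ℝ)) one_pos
    have hle : ((v * ((φ 1 - φ 0) / (1 - 0)) : ℝ) : EReal) ≤ (v : EReal) * L := by
      rw [EReal.coe_mul]
      exact mul_le_mul_of_nonneg_left hc (by exact_mod_cast hv)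
    intro hb
    rw [hb] at hle
    exact EReal.coe_ne_bot _ (le_bot_iff.1 hle)
  · simp

lemma ereal_sum_ne_bot {ι : Type*} (t : Finset ι) (f : ι → EReal)
    (h : ∀ i ∈ t, f i ≠ ⊥) : ∑ i ∈ t, f i ≠ ⊥ := by
  classical
  induction t using Finset.induction_on with
  | empty => simp
  | insert _ _ hi ih =>
    rename_i i t
    intro hbot
    rw [Finset.sum_insert hi] at hbot
    rcases EReal.add_eq_bot_iff.1 hbot with h1 | h2
    · exact h i (Finset.mem_insert_self i t) h1
    · exact ih (fun j hj => h j (Finset.mem_insert_of_mem hj)) h2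

lemma lsc_sum_ereal {α : Type*} [TopologicalSpace α] {ι : Type*} (t : Finset ι)
    (F : ι → α → EReal) {S : Set α}
    (h : ∀ i ∈ t, LowerSemicontinuousOn (F i) S)
    (hnb : ∀ i ∈ t, ∀ x ∈ S, F i x ≠ ⊥) :
    LowerSemicontinuousOn (fun x => ∑ i ∈ t, F i x) S := by
  classical
  revert h hnb
  induction t using Finset.induction_on with
  | empty =>
    intro _ _
    simp only [Finset.sum_empty]
    exact fun x (_ : x ∈ S) => lowerSemicontinuousWithinAt_const
  | insert _ _ hi ih =>
    rename_i i t
    intro h hnb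
    simp only [Finset.sum_insert hi]
    refine LowerSemicontinuousOn.add' (h i (Finset.mem_insert_self i t))
      (ih (fun j hj => h j (Finset.mem_insert_of_mem hj))
        (fun j hj => hnb j (Finset.mem_insert_of_mem hj))) ?_
    intro x hx
    apply EReal.continuousAt_add
    · exact Or.inr (ereal_sum_ne_bot t _ (fun j hj => hnb j (Finset.mem_insert_of_mem hj) x hx))
    · exact Or.inl (hnb i (Finset.mem_insert_self i t) x hx)

lemma lsc_comp {α β : Type*} [TopologicalSpace α] [TopologicalSpace β]
    {f : β → EReal} {T : Set β} (hf : LowerSemicontinuousOn f T)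
    {g : α → β} {S : Set α} (hg : Continuous g) (hmaps : Set.MapsTo g S T) :
    LowerSemicontinuousOn (fun x => f (g x)) S := by
  intro x hx y hy
  exact (hg.continuousWithinAt.tendsto_nhdsWithin hmaps).eventually (hf (g x) (hmaps hx) y hy)

end Aux

/-- the map `(s,t) ↦ D_φ(s∣t)` is lower semicontinuous on
`[0,∞)^m × [0,∞)^m`. -/
theorem statement0 (m : ℕ) (hm : 1 ≤ m) (φ : ℝ → ℝ) (L : EReal)
    (hφconv : ConvexOn ℝ (Set.Ici 0) φ)
    (hφ0 : ContinuousWithinAt φ (Set.Ici 0) 0)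
    (hL : Tendsto (fun x : ℝ => ((φ x / x : ℝ) : EReal)) atTop (𝓝 L)) :
    LowerSemicontinuousOn
      (fun p : (Fin m → ℝ) × (Fin m → ℝ) => Dphi φ L p.1 p.2)
      {p : (Fin m → ℝ) × (Fin m → ℝ) | (∀ i, 0 ≤ p.1 i) ∧ (∀ i, 0 ≤ p.2 i)} := by
  have key := phiF_lscOn hφconv hφ0 hL
  have hterm : ∀ i : Fin m, LowerSemicontinuousOn
      (fun p : (Fin m → ℝ) × (Fin m → ℝ) => phiF φ L (p.1 i) (p.2 i))
      {p : (Fin m → ℝ) × (Fin m → ℝ) | (∀ i, 0 ≤ p.1 i) ∧ (∀ i, 0 ≤ p.2 i)} := by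
    intro i
    have hmaps : Set.MapsTo (fun p : (Fin m → ℝ) × (Fin m → ℝ) => (p.1 i, p.2 i))
        {p : (Fin m → ℝ) × (Fin m → ℝ) | (∀ i, 0 ≤ p.1 i) ∧ (∀ i, 0 ≤ p.2 i)}
        {p : ℝ × ℝ | 0 ≤ p.1 ∧ 0 ≤ p.2} :=
      fun q hq => ⟨hq.1 i, hq.2 i⟩
    exact lsc_comp key
      ((continuous_apply i).comp continuous_fst |>.prodMk
        ((continuous_apply i).comp continuous_snd))
      hmaps
  have hsum := lsc_sum_ereal Finset.univ
    (fun (i : Fin m) (p : (Fin m → ℝ) × (Fin m → ℝ)) => phiF φ L (p.1 i) (p.2 i))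
    (fun i _ => hterm i)
    (fun i _ p hp => phiF_ne_bot hφconv hL (hp.1 i))
  simpa [Dphi] using hsum
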